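/- Let K be a transition kernel on (E, ℰ) with invariant probability measure π, and let (X_n) be the canonical Markov chain with kernel K and initial law π. For any measurable set B₁, if τ₁ is the hitting time of B₁, then the law of X_{τ₁} under P^π conditioned on {τ₁ < ∞} is absolutely continuous with respect to π. -/

import Mathlib

open MeasureTheory ProbabilityTheory

open scoped Classical in
/-- for a Markov chain `(X n)` with kernel `K` and invariant initial law `π`,
the law of `X τ₁` (where `τ₁` is the hitting time of `B₁`), under `P` conditioned on
`{τ₁ < ∞}`, is absolutely continuous with respect to `π`. -/
theorem hitting_position_abs_continuous
    {E Ω : Type*} [MeasurableSpace E] [MeasurableSpace Ω]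
    (π : Measure E) [IsProbabilityMeasure π]
    (K : Kernel E E) [IsMarkovKernel K]
    (hinv : π.bind K = π)
    (P : Measure Ω) [IsProbabilityMeasure P]
    (X : ℕ → Ω → E) (hXm : ∀ n, Measurable (X n))
    (h0 : P.map (X 0) = π)
    (hMarkov : ∀ n : ℕ,
      P.map (fun ω => ((fun i : Fin (n + 1) => X i ω), X (n + 1) ω))
        = (P.map (fun ω => fun i : Fin (n + 1) => X i ω)) ⊗ₘ
            (K.comap (fun v : Fin (n + 1) → E => v (Fin.last n)) (measurable_pi_apply _)))
    (B₁ : Set E) (hB₁ : MeasurableSet B₁) :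
    ((P[|{ω | ∃ n : ℕ, X n ω ∈ B₁}]).map
        (fun ω => if h : ∃ n : ℕ, X n ω ∈ B₁ then X (Nat.find h) ω else X 0 ω)) ≪ π := by
  -- Each `X n` has law `π`.
  have hlaw : ∀ n, P.map (X n) = π := by
    intro n
    induction n with
    | zero => exact h0
    | succ n ih =>
      have hvec : Measurable (fun ω => fun i : Fin (n + 1) => X i ω) :=
        measurable_pi_lambda _ fun i => hXm i
      have hpair : Measurable (fun ω => ((fun i : Fin (n + 1) => X i ω), X (n + 1) ω)) :=
        hvec.prodMk (hXm (n + 1))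
      haveI : IsProbabilityMeasure (P.map (fun ω => fun i : Fin (n + 1) => X i ω)) :=
        Measure.isProbabilityMeasure_map hvec.aemeasurable
      ext s hs
      have h1 : P.map (X (n + 1)) s
          = (P.map (fun ω => ((fun i : Fin (n + 1) => X i ω), X (n + 1) ω)))
              (Set.univ ×ˢ s) := by
        rw [Measure.map_apply (hXm (n + 1)) hs, Measure.map_apply hpair
          (MeasurableSet.univ.prod hs)]
        congr 1
        ext ω
        simp
      rw [h1, hMarkov n, Measure.compProd_apply_prod MeasurableSet.univ hs]
      have h2 : ∫⁻ v in Set.univ,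
            (K.comap (fun v : Fin (n + 1) → E => v (Fin.last n)) (measurable_pi_apply _)) v s
            ∂(P.map (fun ω => fun i : Fin (n + 1) => X i ω))
          = ∫⁻ v, K (v (Fin.last n)) s ∂(P.map (fun ω => fun i : Fin (n + 1) => X i ω)) := by
        rw [Measure.restrict_univ]
        simp [Kernel.comap_apply]
      rw [h2]
      have h3 : (P.map (fun ω => fun i : Fin (n + 1) => X i ω)).map
          (fun v : Fin (n + 1) → E => v (Fin.last n)) = π := by
        rw [Measure.map_map (measurable_pi_apply _) hvec]
        have : ((fun v : Fin (n + 1) → E => v (Fin.last n)) ∘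
            fun ω => fun i : Fin (n + 1) => X i ω) = X n := by
          ext ω
          simp [Fin.last]
        rw [this, ih]
      have h4 : ∫⁻ v, K (v (Fin.last n)) s ∂(P.map (fun ω => fun i : Fin (n + 1) => X i ω))
          = ∫⁻ x, K x s ∂π := by
        rw [← h3, lintegral_map (Kernel.measurable_coe K hs) (measurable_pi_apply _)]
      rw [h4, ← Measure.bind_apply hs (Kernel.measurable K).aemeasurable, hinv]
  -- Setup.
  set A : Set Ω := {ω | ∃ n : ℕ, X n ω ∈ B₁} with hAdef
  have hAm : MeasurableSet A := by
    have : A = ⋃ n, (X n) ⁻¹' B₁ := by ext ω; simp [hAdef]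
    rw [this]
    exact MeasurableSet.iUnion fun n => (hXm n) hB₁
  set f : Ω → E := fun ω => if h : ∃ n : ℕ, X n ω ∈ B₁ then X (Nat.find h) ω else X 0 ω
    with hfdef
  -- Measurability of `f` via `Measurable.find` with a tweaked predicate.
  have hex : ∀ ω, ∃ n : ℕ, (X n ω ∈ B₁ ∨ (n = 0 ∧ ω ∉ A)) := by
    intro ω
    by_cases h : ω ∈ A
    · obtain ⟨n, hn⟩ := h
      exact ⟨n, Or.inl hn⟩
    · exact ⟨0, Or.inr ⟨rfl, h⟩⟩
  have hfm : Measurable f := by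
    have h1 : Measurable fun ω => X (Nat.find (hex ω)) ω := by
      refine Measurable.find hXm (fun n => ?_) hex
      have : {ω | X n ω ∈ B₁ ∨ (n = 0 ∧ ω ∉ A)}
          = (X n) ⁻¹' B₁ ∪ ({ω : Ω | n = 0} ∩ Aᶜ) := by
        ext ω
        simp [Set.mem_setOf_eq, and_comm]
      rw [this]
      refine ((hXm n) hB₁).union (MeasurableSet.inter ?_ hAm.compl)
      by_cases hn : n = 0
      · simp [hn]
      · simp [hn]
    have h2 : f = fun ω => X (Nat.find (hex ω)) ω := by
      ext ω
      by_cases h : ∃ n : ℕ, X n ω ∈ B₁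
      · have hωA : ω ∈ A := h
        have hfind : Nat.find (hex ω) = Nat.find h := by
          rw [Nat.find_eq_iff]
          refine ⟨Or.inl (Nat.find_spec h), fun m hm => ?_⟩
          rintro (hmem | ⟨_, hA⟩)
          · exact Nat.find_min h hm hmem
          · exact hA hωA
        simp [hfdef, h, hfind]
      · have hωA : ω ∉ A := h
        have hfind : Nat.find (hex ω) = 0 :=
          Nat.find_eq_zero _ |>.2 (Or.inr ⟨rfl, hωA⟩)
        simp [hfdef, h, hfind]
    rw [h2]
    exact h1
  -- Conclusion.
  refine Measure.AbsolutelyContinuous.mk fun s hs hπs => ?_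
  rw [Measure.map_apply hfm hs, cond_apply hAm]
  have hsub : A ∩ f ⁻¹' s ⊆ ⋃ n, (X n) ⁻¹' s := by
    rintro ω ⟨hωA, hωs⟩
    have h : ∃ n : ℕ, X n ω ∈ B₁ := hωA
    refine Set.mem_iUnion.2 ⟨Nat.find h, ?_⟩
    have : f ω = X (Nat.find h) ω := by simp [hfdef, h]
    simpa [this] using hωs
  have hz : P (A ∩ f ⁻¹' s) = 0 := by
    refine measure_mono_null hsub (measure_iUnion_null fun n => ?_)
    have : P ((X n) ⁻¹' s) = π s := by
      rw [← hlaw n, Measure.map_apply (hXm n) hs]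
    rw [this, hπs]
  rw [hz, mul_zero]
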